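/- Let X be a sequentially complete Hausdorff locally convex topological vector space over ℂ with the countable neighbourhood property: for every sequence (α_j)_j of continuous seminorms on X there exist a continuous seminorm α and positive scalars (λ_j)_j with α_j ≤ λ_j α for all j. Let (a_n)_{n≥1} be a sequence in X such that for every continuous linear functional x' on X there exists s ∈ ℂ for which the scalar series Σ_n x'(a_n) n^{−s} converges. Then there exists s ∈ ℂ such that the series Σ_n a_n n^{−s} converges in X. -/

import Mathlib

open Filter Finset Topology


open Filter Finset Topology

noncomputable section DirichletAuxx

/-- Unit phase of a complex number. -/
noncomputable def dphase (z : ℂ) : ℂ := if z = 0 then 1 else (‖z‖⁻¹ : ℝ) • z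

lemma dphase_norm (z : ℂ) : ‖dphase z‖ = 1 := by
  unfold dphase
  split_ifs with h
  · simp
  · have hz : (0:ℝ) < ‖z‖ := norm_pos_iff.mpr h
    have hz' : ‖z‖ ≠ 0 := ne_of_gt hz
    rw [norm_smul, Real.norm_eq_abs, abs_of_nonneg (by positivity)]
    field_simp

lemma dphase_add (z : ℂ) {t : ℝ} (ht : 0 ≤ t) : ‖z + dphase z * (t : ℂ)‖ = ‖z‖ + t := by
  unfold dphase
  split_ifs with h
  · simp [h, Complex.norm_real, abs_of_nonneg ht]
  · have hz : (0:ℝ) < ‖z‖ := norm_pos_iff.mpr h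
    have key : z + ((‖z‖⁻¹ : ℝ) • z) * (t : ℂ) = (((1 + t * ‖z‖⁻¹ : ℝ)) : ℂ) * z := by
      rw [Complex.real_smul]
      push_cast
      ring
    rw [key, norm_mul, Complex.norm_real, Real.norm_eq_abs,
      abs_of_nonneg (by positivity)]
    have hz' : ‖z‖ ≠ 0 := ne_of_gt hz
    field_simp

variable {X : Type*} [AddCommGroup X] [Module ℂ X] [Module ℝ X] [IsScalarTower ℝ ℂ X]

/-- Hahn-Banach with a seminorm majorant, over ℂ. -/
lemma seminorm_hahn_banach (α : Seminorm ℂ X) (x : X) :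
    ∃ f : X →ₗ[ℂ] ℂ, (∀ y, ‖f y‖ ≤ α y) ∧ f x = (α x : ℂ) := by
  rcases eq_or_ne x 0 with rfl | hx
  · exact ⟨0, fun y => by simpa using apply_nonneg α y, by simp⟩
  -- real Hahn-Banach on the span of x
  have hsmul : ∀ (c : ℝ) (y : X), α (c • y) = |c| * α y := by
    intro c y
    rw [← algebraMap_smul ℂ c y, map_smul_eq_mul]
    simp [Complex.norm_real]
  set f0 : X →ₗ.[ℝ] ℝ := LinearPMap.mkSpanSingleton x (α x) hx with hf0
  have hdom : ∀ z : f0.domain, ∃ c : ℝ, c • x = (z : X) := by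
    intro z
    exact Submodule.mem_span_singleton.mp z.2
  have hf0le : ∀ z : f0.domain, f0 z ≤ α z := by
    intro z
    obtain ⟨c, hc⟩ := hdom z
    have hz : z = ⟨c • x, hc ▸ z.2⟩ := by ext; exact hc.symm
    rw [hz]
    have : f0 ⟨c • x, hc ▸ z.2⟩ = c • (α x) := by
      exact LinearPMap.mkSpanSingleton'_apply x (α x) _ c _
    rw [this, smul_eq_mul]
    calc c * α x ≤ |c| * α x :=
          mul_le_mul_of_nonneg_right (le_abs_self c) (apply_nonneg α x)
      _ = α (c • x) := (hsmul c x).symm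
  obtain ⟨g, hg1, hg2⟩ := exists_extension_of_le_sublinear f0 α
    (fun c hc y => by rw [hsmul, abs_of_pos hc]) (fun y z => map_add_le_add α y z) hf0le
  have hgabs : ∀ y, |g y| ≤ α y := by
    intro y
    rw [abs_le]
    constructor
    · have := hg2 (-y)
      simp only [map_neg] at this
      rw [map_neg_eq_map] at this
      linarith
    · exact hg2 y
  set f : X →ₗ[ℂ] ℂ := g.extendTo𝕜'
  have hre : ∀ y, (f y).re = g y := by
    intro y
    have h := LinearMap.extendTo𝕜'_apply_re (𝕜 := ℂ) g y
    rwa [RCLike.re_to_complex] at h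
  have hbound : ∀ y, ‖f y‖ ≤ α y := by
    intro y
    rcases eq_or_ne (f y) 0 with h0 | h0
    · rw [h0, norm_zero]; exact apply_nonneg α y
    have hsq := LinearMap.norm_extendTo𝕜'_apply_sq (𝕜 := ℂ) g y
    have h1 : ‖f y‖ ^ 2 ≤ α ((starRingEnd ℂ) (f y) • y) := by
      rw [show f y = Module.Dual.extendRCLike g y from rfl, hsq]
      exact (le_abs_self _).trans (hgabs _)
    have h2 : α ((starRingEnd ℂ) (f y) • y) = ‖f y‖ * α y := by
      rw [map_smul_eq_mul]
      simp
    have hpos : (0:ℝ) < ‖f y‖ := norm_pos_iff.mpr h0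
    nlinarith [apply_nonneg α y]
  refine ⟨f, hbound, ?_⟩
  have hgx : g x = α x := by
    have := hg1 ⟨x, Submodule.mem_span_singleton_self x⟩
    rw [this]
    exact LinearPMap.mkSpanSingleton_apply ℝ ℝ hx (α x)
  have hrex : (f x).re = α x := by rw [hre, hgx]
  have h1 : ‖f x‖ ≤ α x := hbound x
  have h2 : (f x).re ≤ ‖f x‖ := Complex.re_le_norm (f x)
  have h3 : ‖f x‖ = α x := le_antisymm h1 (hrex ▸ h2)
  have him : (f x).im = 0 := by
    have hsq := Complex.sq_norm (f x)
    rw [Complex.normSq_apply] at hsq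
    have h4 : ‖f x‖ = ‖f x‖ := rfl
    have e1 : ‖f x‖ ^ 2 = (α x) ^ 2 := by rw [h3]
    have e2 : (f x).re * (f x).re = (α x) ^ 2 := by rw [hrex]; ring
    have him2 : (f x).im * (f x).im = 0 := by linarith
    exact mul_self_eq_zero.mp him2
  apply Complex.ext
  · simpa using hrex
  · simpa using him

end DirichletAuxx

section DirichletAuxx2

variable {X : Type*} [AddCommGroup X] [Module ℂ X] [Module ℝ X] [IsScalarTower ℝ ℂ X]

/-- A linear functional dominated by a continuous seminorm is continuous. -/
lemma continuous_of_seminorm_bound' [UniformSpace X] [IsUniformAddGroup X]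
    (S : X →ₗ[ℂ] ℂ) (α : Seminorm ℂ X) (hα : Continuous α) {K : ℝ} (hK : 0 < K)
    (hb : ∀ y, ‖S y‖ ≤ K * α y) : Continuous S := by
  have h0 : ContinuousAt S 0 := by
    rw [ContinuousAt, map_zero, Metric.tendsto_nhds]
    intro ε hε
    have hU : α ⁻¹' Set.Iio (ε / K) ∈ 𝓝 (0 : X) := by
      apply (hα.isOpen_preimage _ isOpen_Iio).mem_nhds
      simp only [Set.mem_preimage, map_zero, Set.mem_Iio]
      positivity
    filter_upwards [hU] with y hy
    rw [dist_zero_right]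
    calc ‖S y‖ ≤ K * α y := hb y
      _ < K * (ε / K) := by
          exact mul_lt_mul_of_pos_left hy hK
      _ = ε := by field_simp
  exact (uniformContinuous_of_continuousAt_zero S h0).continuous

lemma cauchySeq_of_sub_tendsto {Y : Type*} [UniformSpace Y] [AddCommGroup Y] [IsUniformAddGroup Y]
    {u : ℕ → Y} (h : Tendsto (fun p : ℕ × ℕ => u p.2 - u p.1) (atTop ×ˢ atTop) (𝓝 0)) :
    CauchySeq u := by
  rw [CauchySeq, cauchy_map_iff]
  refine ⟨inferInstance, ?_⟩
  rw [uniformity_eq_comap_nhds_zero, tendsto_comap_iff]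
  exact h

/-- Recursive partial functionals for the phase-alignment construction. -/
noncomputable def auxH (a : ℕ → X) (nn : ℕ → ℕ) (f : ℕ → X →ₗ[ℂ] ℂ) : ℕ → X →ₗ[ℂ] ℂ
  | 0 => 0
  | (k+1) => auxH a nn f k +
      ((((4:ℝ)⁻¹ ^ k : ℝ) : ℂ) * dphase (auxH a nn f k (a (nn k + 1)))) • f k

lemma auxH_apply (a : ℕ → X) (nn : ℕ → ℕ) (f : ℕ → X →ₗ[ℂ] ℂ) (k : ℕ) (y : X) :
    auxH a nn f k y = ∑ j ∈ Finset.range k,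
      ((((4:ℝ)⁻¹ ^ j : ℝ) : ℂ) * dphase (auxH a nn f j (a (nn j + 1)))) * f j y := by
  induction k with
  | zero => simp [auxH]
  | succ k ih =>
      rw [Finset.sum_range_succ, ← ih]
      simp [auxH]

end DirichletAuxx2

section StepA

variable {X : Type*} [AddCommGroup X] [Module ℂ X] [UniformSpace X] [IsUniformAddGroup X]
    [Module ℝ X] [IsScalarTower ℝ ℂ X]

set_option maxHeartbeats 1000000 in
lemma stepA
    (hcnp : ∀ αs : ℕ → Seminorm ℂ X, (∀ j, Continuous (αs j)) →
      ∃ (α : Seminorm ℂ X) (lam : ℕ → ℝ), Continuous α ∧ (∀ j, 0 < lam j) ∧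
        ∀ j, ∀ y : X, αs j y ≤ lam j * α y)
    (a : ℕ → X)
    (h : ∀ x' : X →L[ℂ] ℂ, ∃ s : ℂ, ∃ L : ℂ, Tendsto
      (fun N : ℕ => ∑ n ∈ Finset.range N, (((n + 1 : ℕ) : ℂ) ^ (-s)) * x' (a (n + 1)))
      atTop (𝓝 L)) :
    ∃ m : ℕ, ∀ p : Seminorm ℂ X, Continuous p →
      ∃ C : ℝ, ∀ n : ℕ, p (a (n + 1)) ≤ C * ((n + 1 : ℕ) : ℝ) ^ m := by
  by_contra hA
  push_neg at hA
  choose ps hpc hpbig using hA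
  obtain ⟨α, lam, hαc, hlam, hle⟩ := hcnp ps hpc
  have key : ∀ (m : ℕ) (C : ℝ), ∃ n : ℕ, C * ((n + 1 : ℕ) : ℝ) ^ m < α (a (n + 1)) := by
    intro m C
    obtain ⟨n, hn⟩ := hpbig m (C * lam m)
    refine ⟨n, ?_⟩
    have h1 := hle m (a (n + 1))
    have h2 := hlam m
    nlinarith [pow_nonneg (by positivity : (0:ℝ) ≤ ((n + 1 : ℕ) : ℝ)) m]
  set Ck : ℕ → ℝ := fun k => 4 ^ k + ∑ i ∈ Finset.range (k + 1), α (a (i + 1)) with hCk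
  have hCkpos : ∀ k, 0 < Ck k := by
    intro k
    have : (0:ℝ) ≤ ∑ i ∈ Finset.range (k + 1), α (a (i + 1)) :=
      Finset.sum_nonneg fun i _ => apply_nonneg α _
    have : (0:ℝ) < 4 ^ k := by positivity
    simp only [hCk]
    linarith
  choose nn hnn using fun k => key k (Ck k)
  have hone_le : ∀ k : ℕ, (1:ℝ) ≤ ((nn k + 1 : ℕ) : ℝ) := by
    intro k; exact_mod_cast Nat.one_le_iff_ne_zero.mpr (Nat.succ_ne_zero _)
  have hkle : ∀ k, k ≤ nn k := by
    intro k
    by_contra hlt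
    push_neg at hlt
    have hmem : nn k ∈ Finset.range (k + 1) := Finset.mem_range.mpr (by omega)
    have h1 : α (a (nn k + 1)) ≤ Ck k := by
      have := Finset.single_le_sum (f := fun i => α (a (i + 1)))
        (fun i _ => apply_nonneg α _) hmem
      simp only [hCk]
      have h4 : (0:ℝ) ≤ 4 ^ k := by positivity
      linarith
    have h2 : Ck k ≤ Ck k * ((nn k + 1 : ℕ) : ℝ) ^ k := by
      have h3 : (1:ℝ) ^ k ≤ ((nn k + 1 : ℕ) : ℝ) ^ k :=
        pow_le_pow_left₀ (by norm_num) (hone_le k) k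
      rw [one_pow] at h3
      nlinarith [hCkpos k]
    exact absurd (hnn k) (by push_neg; linarith)
  have hA4 : ∀ k, (4:ℝ) ^ k * ((nn k + 1 : ℕ) : ℝ) ^ k ≤ α (a (nn k + 1)) := by
    intro k
    have h1 := hnn k
    have h2 : (0:ℝ) ≤ ∑ i ∈ Finset.range (k + 1), α (a (i + 1)) :=
      Finset.sum_nonneg fun i _ => apply_nonneg α _
    have h3 : (0:ℝ) ≤ ((nn k + 1 : ℕ) : ℝ) ^ k := by positivity
    simp only [hCk] at h1
    nlinarith
  choose f hf1 hf2 using fun k => seminorm_hahn_banach α (a (nn k + 1))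
  set H : ℕ → X →ₗ[ℂ] ℂ := auxH a nn f with hHdef
  set μ : ℕ → ℂ := fun k => (((4:ℝ)⁻¹ ^ k : ℝ) : ℂ) * dphase (H k (a (nn k + 1))) with hμdef
  have hμn : ∀ k, ‖μ k‖ = (4:ℝ)⁻¹ ^ k := by
    intro k
    rw [hμdef]
    simp only [norm_mul, dphase_norm, mul_one, Complex.norm_real, Real.norm_eq_abs]
    exact abs_of_nonneg (by positivity)
  have hterm : ∀ (k : ℕ) (y : X), ‖μ k * f k y‖ ≤ (4:ℝ)⁻¹ ^ k * α y := by
    intro k y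
    rw [norm_mul, hμn]
    exact mul_le_mul_of_nonneg_left (hf1 k y) (by positivity)
  have hsummaj : Summable (fun j : ℕ => (4:ℝ)⁻¹ ^ j) :=
    summable_geometric_of_lt_one (by norm_num) (by norm_num)
  have hsnorm : ∀ y : X, Summable (fun j => ‖μ j * f j y‖) := fun y =>
    Summable.of_nonneg_of_le (fun _ => norm_nonneg _) (fun j => hterm j y)
      (hsummaj.mul_right (α y))
  have hsum : ∀ y : X, Summable (fun j => μ j * f j y) := fun y => (hsnorm y).of_norm
  set S : X →ₗ[ℂ] ℂ :=
    { toFun := fun y => ∑' j, μ j * f j y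
      map_add' := fun y z => by
        have he : (fun j => μ j * f j (y + z)) = fun j => μ j * f j y + μ j * f j z := by
          funext j; rw [map_add]; ring
        rw [he, Summable.tsum_add (hsum y) (hsum z)]
      map_smul' := fun c y => by
        have he : (fun j => μ j * f j (c • y)) = fun j => c * (μ j * f j y) := by
          funext j; rw [map_smul, smul_eq_mul]; ring
        rw [he, tsum_mul_left]; rfl } with hSdef
  have hSapp : ∀ y : X, S y = ∑' j, μ j * f j y := fun y => rfl
  have hSle : ∀ y : X, ‖S y‖ ≤ 2 * α y := by
    intro y
    calc ‖S y‖ ≤ ∑' j, ‖μ j * f j y‖ := norm_tsum_le_tsum_norm (hsnorm y)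
      _ ≤ ∑' j, (4:ℝ)⁻¹ ^ j * α y :=
          Summable.tsum_le_tsum (fun j => hterm j y) (hsnorm y) (hsummaj.mul_right (α y))
      _ = (∑' j : ℕ, (4:ℝ)⁻¹ ^ j) * α y := tsum_mul_right
      _ = (1 - 4⁻¹)⁻¹ * α y := by rw [tsum_geometric_of_lt_one (by norm_num) (by norm_num)]
      _ ≤ 2 * α y := by nlinarith [apply_nonneg α y]
  have Scont : Continuous S :=
    continuous_of_seminorm_bound' S α hαc (by norm_num : (0:ℝ) < 2) hSle
  set x' : X →L[ℂ] ℂ := ⟨S, Scont⟩ with hx'def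
  have hlow : ∀ k, ((nn k + 1 : ℕ) : ℝ) ^ k / 2 ≤ ‖x' (a (nn k + 1))‖ := by
    intro k
    set y := a (nn k + 1) with hy
    have hA0 : 0 ≤ α y := apply_nonneg α y
    have hsplit := Summable.sum_add_tsum_nat_add (f := fun j => μ j * f j y) (k + 1) (hsum y)
    have hhead : ∑ j ∈ Finset.range (k + 1), μ j * f j y = H (k + 1) y := by
      rw [hHdef, auxH_apply]
    have hk1 : H (k + 1) y = H k y + dphase (H k y) * (((4:ℝ)⁻¹ ^ k * α y : ℝ) : ℂ) := by
      rw [hHdef]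
      show auxH a nn f (k + 1) y = _
      rw [auxH]
      simp only [LinearMap.add_apply, LinearMap.smul_apply, smul_eq_mul]
      rw [← hy, hf2 k]
      have : auxH a nn f k y = H k y := by rw [hHdef]
      rw [this]
      push_cast
      ring
    have hHn : ‖H (k + 1) y‖ = ‖H k y‖ + (4:ℝ)⁻¹ ^ k * α y := by
      rw [hk1, dphase_add _ (by positivity)]
    have htailsum : Summable (fun j => ‖μ (j + (k + 1)) * f (j + (k + 1)) y‖) :=
      (summable_nat_add_iff (k + 1)).mpr (hsnorm y)
    have htail : ‖∑' j, μ (j + (k + 1)) * f (j + (k + 1)) y‖ ≤ (4:ℝ)⁻¹ ^ k * α y / 2 := by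
      have hmaj : Summable (fun j : ℕ => (4:ℝ)⁻¹ ^ j * ((4:ℝ)⁻¹ ^ (k + 1) * α y)) :=
        hsummaj.mul_right _
      calc ‖∑' j, μ (j + (k + 1)) * f (j + (k + 1)) y‖
          ≤ ∑' j, ‖μ (j + (k + 1)) * f (j + (k + 1)) y‖ := norm_tsum_le_tsum_norm htailsum
        _ ≤ ∑' j : ℕ, (4:ℝ)⁻¹ ^ j * ((4:ℝ)⁻¹ ^ (k + 1) * α y) := by
            refine Summable.tsum_le_tsum (fun j => ?_) htailsum hmaj
            calc ‖μ (j + (k + 1)) * f (j + (k + 1)) y‖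
                ≤ (4:ℝ)⁻¹ ^ (j + (k + 1)) * α y := hterm _ y
              _ = (4:ℝ)⁻¹ ^ j * ((4:ℝ)⁻¹ ^ (k + 1) * α y) := by rw [pow_add]; ring
        _ = (∑' j : ℕ, (4:ℝ)⁻¹ ^ j) * ((4:ℝ)⁻¹ ^ (k + 1) * α y) := tsum_mul_right
        _ ≤ (4:ℝ)⁻¹ ^ k * α y / 2 := by
            rw [tsum_geometric_of_lt_one (by norm_num) (by norm_num), pow_succ]
            nlinarith [pow_nonneg (by norm_num : (0:ℝ) ≤ 4⁻¹) k]
    have hcomb : S y = H (k + 1) y + ∑' j, μ (j + (k + 1)) * f (j + (k + 1)) y := by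
      rw [hSapp, ← hsplit, hhead]
    have hnorm_lb : (4:ℝ)⁻¹ ^ k * α y / 2 ≤ ‖S y‖ := by
      have h5 : ‖H (k + 1) y‖ ≤ ‖S y‖ + ‖∑' j, μ (j + (k + 1)) * f (j + (k + 1)) y‖ := by
        calc ‖H (k + 1) y‖
            = ‖S y - ∑' j, μ (j + (k + 1)) * f (j + (k + 1)) y‖ := by
              rw [hcomb, add_sub_cancel_right]
          _ ≤ ‖S y‖ + ‖∑' j, μ (j + (k + 1)) * f (j + (k + 1)) y‖ := norm_sub_le _ _
      have h6 : 0 ≤ ‖H k y‖ := norm_nonneg _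
      rw [hHn] at h5
      linarith [htail]
    have h7 : ((nn k + 1 : ℕ) : ℝ) ^ k ≤ (4:ℝ)⁻¹ ^ k * α y := by
      have h8 := hA4 k
      have h9 : (0:ℝ) < (4:ℝ)⁻¹ ^ k := by positivity
      have h10 : (4:ℝ)⁻¹ ^ k * ((4:ℝ) ^ k * ((nn k + 1 : ℕ) : ℝ) ^ k) ≤ (4:ℝ)⁻¹ ^ k * α y :=
        mul_le_mul_of_nonneg_left h8 h9.le
      have h11 : (4:ℝ)⁻¹ ^ k * (4:ℝ) ^ k = 1 := by
        rw [← mul_pow]; norm_num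
      have h12 : (4:ℝ)⁻¹ ^ k * ((4:ℝ) ^ k * ((nn k + 1 : ℕ) : ℝ) ^ k)
          = ((nn k + 1 : ℕ) : ℝ) ^ k := by
        rw [← mul_assoc, h11, one_mul]
      linarith
    have : x' (a (nn k + 1)) = S y := rfl
    rw [this]
    linarith
  obtain ⟨s, L, hcv⟩ := h x'
  set t : ℕ → ℂ := fun n => (((n + 1 : ℕ) : ℂ) ^ (-s)) * x' (a (n + 1)) with htdef
  have hterm0 : Tendsto t atTop (𝓝 0) := by
    have h1 : Tendsto (fun N : ℕ =>
        (∑ n ∈ Finset.range (N + 1), (((n + 1 : ℕ) : ℂ) ^ (-s)) * x' (a (n + 1))) -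
        ∑ n ∈ Finset.range N, (((n + 1 : ℕ) : ℂ) ^ (-s)) * x' (a (n + 1)))
        atTop (𝓝 (L - L)) :=
      (hcv.comp (tendsto_add_atTop_nat 1)).sub hcv
    rw [sub_self] at h1
    convert h1 using 2 with N
    rw [Finset.sum_range_succ]
    ring
  have hbdd : BddAbove (Set.range fun n => ‖t n‖) := by
    have := hterm0.norm
    rw [norm_zero] at this
    exact this.bddAbove_range
  obtain ⟨C, hC⟩ := hbdd
  have hCb : ∀ n, ‖t n‖ ≤ C := fun n => hC (Set.mem_range_self n)
  have hC0 : 0 ≤ C := le_trans (norm_nonneg (t 0)) (hCb 0)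
  have hx'b : ∀ n : ℕ, ‖x' (a (n + 1))‖ ≤ C * ((n + 1 : ℕ) : ℝ) ^ (s.re) := by
    intro n
    have hr : (0:ℝ) < ((n + 1 : ℕ) : ℝ) := by positivity
    have hn1 : ‖t n‖ = ((n + 1 : ℕ) : ℝ) ^ ((-s).re) * ‖x' (a (n + 1))‖ := by
      rw [htdef]
      dsimp only
      rw [norm_mul, Complex.norm_natCast_cpow_of_pos (Nat.succ_pos n)]
    have hneg : ((n + 1 : ℕ) : ℝ) ^ ((-s).re) = (((n + 1 : ℕ) : ℝ) ^ (s.re))⁻¹ := by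
      rw [Complex.neg_re, Real.rpow_neg hr.le]
    have hp : (0:ℝ) < ((n + 1 : ℕ) : ℝ) ^ (s.re) := Real.rpow_pos_of_pos hr _
    have h2 := hCb n
    rw [hn1, hneg] at h2
    calc ‖x' (a (n + 1))‖
        = ((n + 1 : ℕ) : ℝ) ^ (s.re) * ((((n + 1 : ℕ) : ℝ) ^ (s.re))⁻¹ * ‖x' (a (n + 1))‖) := by
          field_simp
      _ ≤ ((n + 1 : ℕ) : ℝ) ^ (s.re) * C := mul_le_mul_of_nonneg_left h2 hp.le
      _ = C * ((n + 1 : ℕ) : ℝ) ^ (s.re) := mul_comm _ _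
  obtain ⟨M, hM⟩ := exists_nat_ge s.re
  set j : ℕ := Nat.ceil (2 * C) + 2 with hjdef
  set k : ℕ := M + j with hkdef
  set r : ℝ := ((nn k + 1 : ℕ) : ℝ) with hrdef
  have hr1 : (1:ℝ) ≤ r := hone_le k
  have hrk : ((k:ℝ) + 1) ≤ r := by
    rw [hrdef]
    have := hkle k
    exact_mod_cast Nat.succ_le_succ this
  have hchain : r ^ k / 2 ≤ C * r ^ M := by
    calc r ^ k / 2 ≤ ‖x' (a (nn k + 1))‖ := hlow k
      _ ≤ C * r ^ (s.re) := hx'b (nn k)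
      _ ≤ C * r ^ ((M:ℝ)) :=
          mul_le_mul_of_nonneg_left (Real.rpow_le_rpow_of_exponent_le hr1 hM) hC0
      _ = C * r ^ M := by rw [Real.rpow_natCast]
  have hrM : (0:ℝ) < r ^ M := by positivity
  have hrj : r ^ j ≤ 2 * C := by
    rw [hkdef, pow_add] at hchain
    have h3 : r ^ M * r ^ j ≤ r ^ M * (2 * C) := by nlinarith
    exact le_of_mul_le_mul_left h3 hrM
  have hjC : 2 * C + 2 ≤ (j : ℝ) := by
    rw [hjdef]
    push_cast
    have := Nat.le_ceil (2 * C)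
    linarith
  have hjk : (j : ℝ) ≤ (k : ℝ) := by
    rw [hkdef]; push_cast; linarith [Nat.cast_nonneg (α := ℝ) M]
  have hrrj : r ≤ r ^ j := le_self_pow₀ hr1 (by omega)
  linarith

end StepA

lemma seminorm_sum_le {X : Type*} [AddCommGroup X] [Module ℂ X] (q : Seminorm ℂ X)
    (s : Finset ℕ) (v : ℕ → X) : q (∑ i ∈ s, v i) ≤ ∑ i ∈ s, q (v i) := by
  induction s using Finset.cons_induction with
  | empty => simp
  | cons i s his ih =>
      rw [Finset.sum_cons, Finset.sum_cons]
      exact le_trans (map_add_le_add q _ _) (by linarith)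

set_option maxHeartbeats 1000000 in
/-- In a sequentially complete Hausdorff locally convex space with the countable
neighbourhood property, if each scalar Dirichlet series `∑ₙ x'(aₙ) n^{-s}` converges
somewhere, then the vector-valued Dirichlet series `∑ₙ aₙ n^{-s}` converges somewhere. -/
theorem dirichlet_finite_abscissa_of_weak_cnp
    {X : Type*} [AddCommGroup X] [Module ℂ X] [UniformSpace X] [IsUniformAddGroup X]
    [ContinuousSMul ℂ X] [T2Space X] [Module ℝ X] [IsScalarTower ℝ ℂ X]
    [LocallyConvexSpace ℝ X]
    (hseq : ∀ u : ℕ → X, CauchySeq u → ∃ x : X, Tendsto u atTop (𝓝 x))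
    (hcnp : ∀ αs : ℕ → Seminorm ℂ X, (∀ j, Continuous (αs j)) →
      ∃ (α : Seminorm ℂ X) (lam : ℕ → ℝ), Continuous α ∧ (∀ j, 0 < lam j) ∧
        ∀ j, ∀ y : X, αs j y ≤ lam j * α y)
    (a : ℕ → X)
    (h : ∀ x' : X →L[ℂ] ℂ, ∃ s : ℂ, ∃ L : ℂ, Tendsto
      (fun N : ℕ => ∑ n ∈ Finset.range N, (((n + 1 : ℕ) : ℂ) ^ (-s)) * x' (a (n + 1)))
      atTop (𝓝 L)) :
    ∃ s : ℂ, ∃ L : X, Tendsto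
      (fun N : ℕ => ∑ n ∈ Finset.range N, (((n + 1 : ℕ) : ℂ) ^ (-s)) • a (n + 1))
      atTop (𝓝 L) := by
  classical
  haveI hsc : SMulCommClass ℝ ℂ X := ⟨fun r c x => by
    rw [← algebraMap_smul ℂ r x, ← algebraMap_smul ℂ r (c • x), smul_smul, smul_smul, mul_comm]⟩
  haveI hcs : ContinuousSMul ℝ X := ⟨by
    have he : (fun p : ℝ × X => p.1 • p.2) = fun p : ℝ × X => ((p.1 : ℂ)) • p.2 := by
      funext p
      rw [← algebraMap_smul ℂ p.1 p.2, Complex.coe_algebraMap]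
    rw [he]
    exact (Complex.continuous_ofReal.comp continuous_fst).smul continuous_snd⟩
  have e : ∀ (r : ℝ) (v : X), ((r : ℂ)) • v = r • v := fun r v => by
    rw [← algebraMap_smul ℂ r v, Complex.coe_algebraMap]
  open scoped ComplexOrder in
  haveI hlc : LocallyConvexSpace ℂ X := by
    refine ⟨fun x => (LocallyConvexSpace.convex_basis (𝕜 := ℝ) x).congr
      (fun t => and_congr_right fun _ => ?_) (fun _ _ => rfl)⟩
    constructor
    · intro hs y hy z hz a b ha hb hab
      obtain ⟨ha1, ha2⟩ := Complex.nonneg_iff.mp ha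
      obtain ⟨hb1, hb2⟩ := Complex.nonneg_iff.mp hb
      have ea : a = (a.re : ℂ) := Complex.ext rfl (by simp [← ha2])
      have eb : b = (b.re : ℂ) := Complex.ext rfl (by simp [← hb2])
      have := hs hy hz ha1 hb1 (by simpa using congrArg Complex.re hab)
      rw [ea, eb, e, e]
      exact this
    · intro hs y hy z hz a b ha hb hab
      have := hs hy hz (Complex.zero_le_real.mpr ha) (Complex.zero_le_real.mpr hb)
        (by exact_mod_cast hab)
      rw [e, e] at this
      exact this
  have hw : WithSeminorms (gaugeSeminormFamily ℂ X) := with_gaugeSeminormFamily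
  obtain ⟨m, hm⟩ := stepA hcnp a h
  set s : ℂ := (((m : ℝ) + 2 : ℝ) : ℂ) with hsdef
  set T : ℕ → X := fun n => (((n + 1 : ℕ) : ℂ) ^ (-s)) • a (n + 1) with hTdef
  have claim : ∀ q : Seminorm ℂ X, Continuous ⇑q → ∀ ε : ℝ, 0 < ε →
      ∀ᶠ p : ℕ × ℕ in atTop ×ˢ atTop,
        q ((∑ n ∈ Finset.range p.2, T n) - ∑ n ∈ Finset.range p.1, T n) < ε := by
    intro q hq ε hε
    obtain ⟨C, hC⟩ := hm q hq
    have hC0 : 0 ≤ C := by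
      have := hC 0
      norm_num at this
      exact le_trans (apply_nonneg q _) (by simpa using this)
    set g : ℕ → ℝ := fun n => C * ((((n + 1 : ℕ) : ℝ)) ^ 2)⁻¹ with hgdef
    have hg0 : ∀ n, 0 ≤ g n := by
      intro n; rw [hgdef]; positivity
    have hqT : ∀ n : ℕ, q (T n) ≤ g n := by
      intro n
      have hr : (0:ℝ) < ((n + 1 : ℕ) : ℝ) := by positivity
      rw [hTdef]
      dsimp only
      rw [map_smul_eq_mul, Complex.norm_natCast_cpow_of_pos (Nat.succ_pos n)]
      have hre : (-s).re = -((m:ℝ) + 2) := by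
        rw [hsdef, Complex.neg_re, Complex.ofReal_re]
      have hcast : ((m:ℝ) + 2) = ((m + 2 : ℕ) : ℝ) := by push_cast; ring
      have hpow : ((n + 1 : ℕ) : ℝ) ^ ((-s).re)
          = (((n + 1 : ℕ) : ℝ) ^ m * ((n + 1 : ℕ) : ℝ) ^ 2)⁻¹ := by
        rw [hre, Real.rpow_neg hr.le, hcast, Real.rpow_natCast, pow_add]
      rw [hpow]
      have h1 : (0:ℝ) ≤ (((n + 1 : ℕ) : ℝ) ^ m * ((n + 1 : ℕ) : ℝ) ^ 2)⁻¹ := by positivity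
      calc (((n + 1 : ℕ) : ℝ) ^ m * ((n + 1 : ℕ) : ℝ) ^ 2)⁻¹ * q (a (n + 1))
          ≤ (((n + 1 : ℕ) : ℝ) ^ m * ((n + 1 : ℕ) : ℝ) ^ 2)⁻¹ * (C * ((n + 1 : ℕ) : ℝ) ^ m) :=
            mul_le_mul_of_nonneg_left (hC n) h1
        _ = g n := by
            rw [hgdef]
            have hrm : ((n + 1 : ℕ) : ℝ) ^ m ≠ 0 := by positivity
            have hr2 : ((n + 1 : ℕ) : ℝ) ^ 2 ≠ 0 := by positivity
            field_simp
    have hg : Summable g := by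
      have h2 : Summable (fun n : ℕ => (((n : ℕ) : ℝ) ^ 2)⁻¹) := by
        have := Real.summable_one_div_nat_pow.mpr (le_refl 2)
        simpa [one_div] using this
      exact ((summable_nat_add_iff 1).mpr h2).mul_left C
    set G : ℕ → ℝ := fun N => ∑ i ∈ Finset.range N, g i with hGdef
    have hGC : CauchySeq G := hg.hasSum.tendsto_sum_nat.cauchySeq
    rw [Metric.cauchySeq_iff] at hGC
    obtain ⟨N, hN⟩ := hGC ε hε
    filter_upwards [(eventually_ge_atTop N).prod_inl atTop,
      (eventually_ge_atTop N).prod_inr atTop] with p hp1 hp2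
    have hkey : ∀ i j : ℕ, N ≤ i → N ≤ j → i ≤ j →
        q ((∑ n ∈ Finset.range j, T n) - ∑ n ∈ Finset.range i, T n) < ε := by
      intro i j hi hj hij
      have hsub : (∑ n ∈ Finset.range j, T n) - ∑ n ∈ Finset.range i, T n
          = ∑ n ∈ Finset.Ico i j, T n := (Finset.sum_Ico_eq_sub _ hij).symm
      have hGsub : G j - G i = ∑ n ∈ Finset.Ico i j, g n := by
        rw [hGdef]; exact (Finset.sum_Ico_eq_sub _ hij).symm
      have hdist := hN j hj i hi
      rw [Real.dist_eq] at hdist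
      calc q ((∑ n ∈ Finset.range j, T n) - ∑ n ∈ Finset.range i, T n)
          ≤ ∑ n ∈ Finset.Ico i j, q (T n) := by
            rw [hsub]; exact seminorm_sum_le q _ T
        _ ≤ ∑ n ∈ Finset.Ico i j, g n := Finset.sum_le_sum fun n _ => hqT n
        _ = G j - G i := hGsub.symm
        _ ≤ |G j - G i| := le_abs_self _
        _ < ε := hdist
    rcases le_total p.1 p.2 with h12 | h21
    · exact hkey p.1 p.2 hp1 hp2 h12
    · rw [map_sub_rev]
      exact hkey p.2 p.1 hp2 hp1 h21
  have hcauchy : CauchySeq (fun N : ℕ => ∑ n ∈ Finset.range N, T n) := by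
    apply cauchySeq_of_sub_tendsto
    rw [WithSeminorms.tendsto_nhds hw]
    intro i ε hε
    simp only [sub_zero]
    exact claim (gaugeSeminormFamily ℂ X i) (hw.continuous_seminorm i) ε hε
  obtain ⟨L, hL⟩ := hseq _ hcauchy
  exact ⟨s, L, hL⟩
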